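/- Let B be a complex unital Banach algebra, z₀ ∈ ℂ, U an open neighborhood of z₀, n ≥ 1 an integer, b₀, …, b_{n−1} ∈ B, and R₀ : U → B holomorphic. Suppose the function R : U \ {z₀} → B defined by R(z) = Σ_{k=0}^{n−1} b_k·(z−z₀)^{−(k+1)} + R₀(z) satisfies the resolvent equation on U \ {z₀}. Then b₀ is idempotent (b₀² = b₀); b₀·b_k = b_k·b₀ = b_k for all 0 ≤ k ≤ n−1; if n ≥ 2 then b_k = b₁^k for all 1 ≤ k ≤ n−1, and b₁^n = 0. -/

import Mathlib

/-- A function `R` from a subset `S ⊆ ℂ` into a complex algebra satisfies the resolvent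
equation on `S` if `R z₁ - R z₂ = (z₂ - z₁) • (R z₁ * R z₂)` for all `z₁, z₂ ∈ S`. -/
def ResolventEq {B : Type*} [Ring B] [Algebra ℂ B] (S : Set ℂ) (R : ℂ → B) : Prop :=
  ∀ z₁ ∈ S, ∀ z₂ ∈ S, R z₁ - R z₂ = (z₂ - z₁) • (R z₁ * R z₂)

open Filter Finset Topology

section lemA
variable {B : Type*} [NormedAddCommGroup B] [NormedSpace ℂ B]

lemma lemA : ∀ (m : ℕ) (a : ℕ → B) (h : ℂ → B) (L : B),
    Tendsto h (𝓝[≠] (0:ℂ)) (𝓝 L) →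
    (∀ᶠ w in 𝓝[≠] (0:ℂ), ∑ j ∈ Finset.range m, w ^ j • a j = w ^ m • h w) →
    ∀ j < m, a j = 0 := by
  intro m
  induction m with
  | zero => intro a h L _ _ j hj; omega
  | succ m ih =>
    intro a h L hL heq
    haveI : (𝓝[≠] (0:ℂ)).NeBot := Module.punctured_nhds_neBot ℂ ℂ 0
    have ha0 : a 0 = 0 := by
      have t1 : Tendsto (fun w : ℂ => ∑ j ∈ Finset.range (m+1), w ^ j • a j) (𝓝[≠] (0:ℂ))
          (𝓝 (a 0)) := by
        have tc : Continuous (fun w : ℂ => ∑ j ∈ Finset.range (m+1), w ^ j • a j) := by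
          continuity
        have := tc.tendsto 0
        have hv : ∑ j ∈ Finset.range (m+1), (0:ℂ) ^ j • a j = a 0 := by
          rw [Finset.sum_range_succ']
          simp
        rw [hv] at this
        exact this.mono_left nhdsWithin_le_nhds
      have t2 : Tendsto (fun w : ℂ => w ^ (m+1) • h w) (𝓝[≠] (0:ℂ)) (𝓝 (0:B)) := by
        have : Tendsto (fun w : ℂ => w ^ (m+1)) (𝓝[≠] (0:ℂ)) (𝓝 (0:ℂ)) := by
          have : Tendsto (fun w : ℂ => w ^ (m+1)) (𝓝 (0:ℂ)) (𝓝 ((0:ℂ) ^ (m+1))) :=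
            (continuous_pow (m+1)).tendsto 0
          simpa [zero_pow] using this.mono_left nhdsWithin_le_nhds
        simpa using this.smul hL
      exact tendsto_nhds_unique (t1.congr' heq) t2
    have heq2 : ∀ᶠ w in 𝓝[≠] (0:ℂ),
        ∑ j ∈ Finset.range m, w ^ j • (a ∘ Nat.succ) j = w ^ m • h w := by
      filter_upwards [heq, self_mem_nhdsWithin] with w hw hw0
      have hw0' : w ≠ 0 := hw0
      have : ∑ j ∈ Finset.range (m+1), w ^ j • a j
          = w • ∑ j ∈ Finset.range m, w ^ j • a (j+1) := by
        rw [Finset.sum_range_succ', ha0, Finset.smul_sum]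
        simp [pow_succ, smul_smul, mul_comm]
      rw [this] at hw
      have := congrArg (fun x => w⁻¹ • x) hw
      simp only [inv_smul_smul₀ hw0'] at this
      simp only [Function.comp_apply, Nat.succ_eq_add_one]
      rw [this]
      rw [← smul_assoc, smul_eq_mul, pow_succ]
      ring_nf
      rw [mul_comm w _, mul_assoc, mul_inv_cancel₀ hw0', mul_one]
    intro j hj
    rcases Nat.eq_zero_or_pos j with rfl | hpos
    · exact ha0
    · obtain ⟨i, rfl⟩ : ∃ i, j = i + 1 := ⟨j - 1, by omega⟩
      exact ih (a ∘ Nat.succ) h L hL heq2 i (by omega)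

lemma shiftSum (w : ℂ) (m : ℕ) (c : ℕ → B) :
    ∑ j ∈ Finset.range (m+1), w ^ (j+1) • c j
      = (∑ j ∈ Finset.range (m+1), w ^ j • (if j = 0 then 0 else c (j-1))) + w ^ (m+1) • c m := by
  rw [Finset.sum_range_succ, Finset.sum_range_succ' (fun j => w ^ j • (if j = 0 then (0:B) else c (j-1)))]
  simp

end lemA

section core
variable {B : Type*} [NormedRing B] [NormedAlgebra ℂ B]

lemma core (z₀ : ℂ) (U : Set ℂ) (hU : IsOpen U) (hz₀ : z₀ ∈ U)
    (n : ℕ) (hn : 1 ≤ n) (b : ℕ → B) (R₀ : ℂ → B) (hcont : ContinuousAt R₀ z₀)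
    (R : ℂ → B)
    (hR : ∀ z ∈ U \ {z₀},
      R z = (∑ k ∈ Finset.range n, ((z - z₀) ^ (k + 1))⁻¹ • b k) + R₀ z)
    (hres : ResolventEq (U \ {z₀}) R) :
    (∀ k < n, b k * b 0 = b k) ∧
    (∀ k < n, ∀ t < n, (if k+1 < n then b (k+1) else 0) * b t
        = b k * (if t+1 < n then b (t+1) else 0)) := by
  haveI : (𝓝[≠] (0:ℂ)).NeBot := Module.punctured_nhds_neBot ℂ ℂ 0
  have hUmem : ∀ᶠ w in 𝓝[≠] (0:ℂ), z₀ + w ∈ U \ {z₀} := by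
    have h1 : ∀ᶠ w in 𝓝 (0:ℂ), z₀ + w ∈ U := by
      have ht : Filter.Tendsto (fun w : ℂ => z₀ + w) (𝓝 0) (𝓝 z₀) := by
        simpa using (continuous_add_left z₀).tendsto (0:ℂ)
      exact ht.eventually (hU.eventually_mem hz₀)
    filter_upwards [nhdsWithin_le_nhds h1, self_mem_nhdsWithin] with w hw hw0
    refine ⟨hw, fun h => hw0 ?_⟩
    simpa using h
  have hwne : ∀ {w : ℂ}, z₀ + w ∈ U \ {z₀} → w ≠ 0 := by
    intro w hw h
    exact hw.2 (by simp [h])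
  have hz0T : Tendsto (fun w : ℂ => R₀ (z₀ + w)) (𝓝[≠] (0:ℂ)) (𝓝 (R₀ z₀)) := by
    have ht : Filter.Tendsto (fun w : ℂ => z₀ + w) (𝓝 0) (𝓝 z₀) := by
      simpa using (continuous_add_left z₀).tendsto (0:ℂ)
    exact (hcont.tendsto.comp ht).mono_left nhdsWithin_le_nhds
  have keyR : ∀ w : ℂ, z₀ + w ∈ U \ {z₀} →
      w ^ n • R (z₀ + w) = (∑ j ∈ Finset.range n, w ^ j • b (n-1-j)) + w ^ n • R₀ (z₀ + w) := by
    intro w hw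
    have hw0 : w ≠ 0 := hwne hw
    rw [hR _ hw, smul_add]
    congr 1
    rw [add_sub_cancel_left, Finset.smul_sum]
    conv_rhs => rw [← Finset.sum_range_reflect (fun j => w ^ j • b (n-1-j)) n]
    apply Finset.sum_congr rfl
    intro k hk
    simp only [Finset.mem_range] at hk
    have e1 : n - 1 - (n - 1 - k) = k := by omega
    rw [e1, smul_smul]
    congr 1
    rw [mul_inv_eq_iff_eq_mul₀ (pow_ne_zero _ hw0), ← pow_add]
    congr 1
    omega
  -- Step 1
  have step1 : ∀ z₂ ∈ U \ {z₀}, ∀ k < n,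
      b k + (if k+1 < n then b (k+1) else 0) * R z₂ = (z₂ - z₀) • (b k * R z₂) := by
    intro z₂ hz₂ k hk
    set u := z₂ - z₀ with hu
    set A := R z₂ with hA
    set a : ℕ → B := fun j => b (n-1-j) - u • (b (n-1-j) * A)
        + (if j = 0 then 0 else b (n-1-(j-1)) * A) with ha
    set h : ℂ → B := fun w => A - R₀ (z₀+w) + (u - w) • (R₀ (z₀+w) * A) - b 0 * A with hh
    have hhT : Tendsto h (𝓝[≠] (0:ℂ)) (𝓝 (A - R₀ z₀ + u • (R₀ z₀ * A) - b 0 * A)) := by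
      apply Tendsto.sub _ tendsto_const_nhds
      apply Tendsto.add (tendsto_const_nhds.sub hz0T)
      have h2 : Tendsto (fun w : ℂ => u - w) (𝓝[≠] (0:ℂ)) (𝓝 u) := by
        have hid : Tendsto (fun w : ℂ => w) (𝓝[≠] (0:ℂ)) (𝓝 0) :=
          tendsto_id.mono_left nhdsWithin_le_nhds
        have hc : Tendsto (fun _ : ℂ => u) (𝓝[≠] (0:ℂ)) (𝓝 u) := tendsto_const_nhds
        simpa using hc.sub hid
      exact h2.smul (hz0T.mul tendsto_const_nhds)
    have heq1 : ∀ w : ℂ, z₀ + w ∈ U \ {z₀} →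
        ∑ j ∈ Finset.range n, w ^ j • a j = w ^ n • h w := by
      intro w hw
      have hw0 : w ≠ 0 := hwne hw
      have hre := hres (z₀ + w) hw z₂ hz₂
      have hzw : z₂ - (z₀ + w) = u - w := by rw [hu]; ring
      rw [hzw] at hre
      set P := ∑ j ∈ Finset.range n, w ^ j • b (n-1-j) with hP
      set Rz := R₀ (z₀ + w) with hRz
      have hre3 : P + w ^ n • Rz - w ^ n • A
          = (u - w) • (P * A) + (u - w) • (w ^ n • (Rz * A)) := by
        have h1 := congrArg (fun x => w ^ n • x) hre
        simp only [smul_sub] at h1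
        rw [keyR w hw] at h1
        calc P + w ^ n • Rz - w ^ n • A
            = w ^ n • ((u - w) • (R (z₀ + w) * A)) := h1
          _ = (u - w) • ((w ^ n • R (z₀ + w)) * A) := by
              rw [smul_comm, smul_mul_assoc]
          _ = (u - w) • (P * A) + (u - w) • (w ^ n • (Rz * A)) := by
              rw [keyR w hw, add_mul, smul_mul_assoc, smul_add]
      have ePA : P * A = ∑ j ∈ Finset.range n, w ^ j • (b (n-1-j) * A) := by
        rw [hP, Finset.sum_mul]
        exact Finset.sum_congr rfl fun j _ => smul_mul_assoc _ _ _
      have euPA : u • (P * A) = ∑ j ∈ Finset.range n, w ^ j • (u • (b (n-1-j) * A)) := by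
        rw [ePA, Finset.smul_sum]
        exact Finset.sum_congr rfl fun j _ => smul_comm _ _ _
      have ewPA : w • (P * A)
          = (∑ j ∈ Finset.range n, w ^ j • (if j = 0 then 0 else b (n-1-(j-1)) * A))
            + w ^ n • (b (n-1-(n-1)) * A) := by
        obtain ⟨m, rfl⟩ : ∃ m, n = m + 1 := ⟨n-1, by omega⟩
        rw [ePA, Finset.smul_sum]
        rw [show (∑ j ∈ Finset.range (m+1), w • (w ^ j • (b (m+1-1-j) * A)))
            = ∑ j ∈ Finset.range (m+1), w ^ (j+1) • (b (m+1-1-j) * A) from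
          Finset.sum_congr rfl fun j _ => by rw [smul_smul, ← pow_succ']]
        exact shiftSum w m (fun j => b (m+1-1-j) * A)
      have esum : ∑ j ∈ Finset.range n, w ^ j • a j
          = P - u • (P * A) + (w • (P * A) - w ^ n • (b (n-1-(n-1)) * A)) := by
        have e0 : ∀ j ∈ Finset.range n, w ^ j • a j
            = w ^ j • b (n-1-j) - w ^ j • (u • (b (n-1-j) * A))
              + w ^ j • (if j = 0 then 0 else b (n-1-(j-1)) * A) := by
          intro j _
          simp only [ha]
          rw [smul_add, smul_sub]
        rw [Finset.sum_congr rfl e0, Finset.sum_add_distrib, Finset.sum_sub_distrib,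
          ← euPA, eq_sub_of_add_eq ewPA.symm, ← hP]
      rw [esum]
      simp only [hh]
      simp only [show n-1-(n-1) = 0 from by omega]
      rw [← hRz]
      linear_combination (norm := module) hre3
    have hcoef := lemA n a h _ hhT (hUmem.mono fun w hw => heq1 w hw)
    have h1 := hcoef (n-1-k) (by omega)
    simp only [ha] at h1
    rw [show n-1-(n-1-k) = k from by omega] at h1
    have e2 : (if n-1-k = 0 then (0:B) else b (n-1-(n-1-k-1)) * A)
        = (if k+1 < n then b (k+1) else 0) * A := by
      by_cases hc : k + 1 < n
      · rw [if_neg (by omega), if_pos hc]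
        congr 2
        omega
      · rw [if_pos (by omega), if_neg hc, zero_mul]
    rw [e2] at h1
    rw [sub_add_eq_add_sub, sub_eq_zero] at h1
    exact h1
  -- Step 2
  have step2 : ∀ k < n,
      (∀ t < n, (if k+1 < n then b (k+1) else 0) * b t
          = b k * (if t+1 < n then b (t+1) else 0)) ∧
      (∀ z₂ ∈ U \ {z₀}, b k * b 0 + (z₂ - z₀) • (b k * R₀ z₂) - b k
          - (if k+1 < n then b (k+1) else 0) * R₀ z₂ = 0) := by
    intro k hk
    set bk1 : B := (if k+1 < n then b (k+1) else 0) with hbk1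
    set a : ℕ → B := fun j => bk1 * b (n-1-j)
        - (if j = 0 then 0 else b k * b (n-1-(j-1))) with ha
    set h : ℂ → B := fun u => b k * b 0 + u • (b k * R₀ (z₀+u)) - b k - bk1 * R₀ (z₀+u)
      with hh
    have hhT : Tendsto h (𝓝[≠] (0:ℂ))
        (𝓝 (b k * b 0 + (0:ℂ) • (b k * R₀ z₀) - b k - bk1 * R₀ z₀)) := by
      have hid : Tendsto (fun u : ℂ => u) (𝓝[≠] (0:ℂ)) (𝓝 0) :=
        tendsto_id.mono_left nhdsWithin_le_nhds
      exact ((tendsto_const_nhds.add (hid.smul (hz0T.const_mul (b k)))).sub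
        tendsto_const_nhds).sub (hz0T.const_mul bk1)
    have heq1 : ∀ u : ℂ, z₀ + u ∈ U \ {z₀} →
        ∑ j ∈ Finset.range n, u ^ j • a j = u ^ n • h u := by
      intro u hu
      have hu0 : u ≠ 0 := hwne hu
      have hst := step1 (z₀ + u) hu k hk
      rw [add_sub_cancel_left, ← hbk1] at hst
      set P := ∑ j ∈ Finset.range n, u ^ j • b (n-1-j) with hP
      set Rz := R₀ (z₀ + u) with hRz
      have hst2 : u ^ n • b k + (bk1 * P + u ^ n • (bk1 * Rz))
          = u • (b k * P) + u • (u ^ n • (b k * Rz)) := by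
        calc u ^ n • b k + (bk1 * P + u ^ n • (bk1 * Rz))
            = u ^ n • b k + bk1 * (P + u ^ n • Rz) := by rw [mul_add, mul_smul_comm]
          _ = u ^ n • b k + bk1 * (u ^ n • R (z₀ + u)) := by rw [← keyR u hu]
          _ = u ^ n • b k + u ^ n • (bk1 * R (z₀ + u)) := by rw [mul_smul_comm]
          _ = u ^ n • (b k + bk1 * R (z₀ + u)) := (smul_add _ _ _).symm
          _ = u ^ n • (u • (b k * R (z₀ + u))) := by rw [hst]
          _ = u • (b k * (u ^ n • R (z₀ + u))) := by rw [smul_comm, mul_smul_comm]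
          _ = u • (b k * (P + u ^ n • Rz)) := by rw [keyR u hu]
          _ = u • (b k * P) + u • (u ^ n • (b k * Rz)) := by
              rw [mul_add, mul_smul_comm, smul_add]
      have ebP : bk1 * P = ∑ j ∈ Finset.range n, u ^ j • (bk1 * b (n-1-j)) := by
        rw [hP, Finset.mul_sum]
        exact Finset.sum_congr rfl fun j _ => (mul_smul_comm _ _ _)
      have ebkP : u • (b k * P)
          = (∑ j ∈ Finset.range n, u ^ j • (if j = 0 then 0 else b k * b (n-1-(j-1))))
            + u ^ n • (b k * b (n-1-(n-1))) := by
        obtain ⟨m, rfl⟩ : ∃ m, n = m + 1 := ⟨n-1, by omega⟩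
        rw [hP, Finset.mul_sum, Finset.smul_sum]
        rw [show (∑ j ∈ Finset.range (m+1), u • (b k * (u ^ j • b (m+1-1-j))))
            = ∑ j ∈ Finset.range (m+1), u ^ (j+1) • (b k * b (m+1-1-j)) from
          Finset.sum_congr rfl fun j _ => by rw [mul_smul_comm, smul_smul, ← pow_succ']]
        exact shiftSum u m (fun j => b k * b (m+1-1-j))
      have esum : ∑ j ∈ Finset.range n, u ^ j • a j
          = bk1 * P - (u • (b k * P) - u ^ n • (b k * b (n-1-(n-1)))) := by
        have e0 : ∀ j ∈ Finset.range n, u ^ j • a j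
            = u ^ j • (bk1 * b (n-1-j))
              - u ^ j • (if j = 0 then 0 else b k * b (n-1-(j-1))) := by
          intro j _
          simp only [ha]
          rw [smul_sub]
        rw [Finset.sum_congr rfl e0, Finset.sum_sub_distrib, ← ebP,
          eq_sub_of_add_eq ebkP.symm]
      rw [esum]
      simp only [hh]
      simp only [show n-1-(n-1) = 0 from by omega]
      rw [← hRz]
      linear_combination (norm := module) hst2
    have hcoef := lemA n a h _ hhT (hUmem.mono fun u hu => heq1 u hu)
    constructor
    · intro t ht
      have h1 := hcoef (n-1-t) (by omega)
      simp only [ha] at h1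
      rw [show n-1-(n-1-t) = t from by omega] at h1
      have e2 : (if n-1-t = 0 then (0:B) else b k * b (n-1-(n-1-t-1)))
          = b k * (if t+1 < n then b (t+1) else 0) := by
        by_cases hc : t + 1 < n
        · rw [if_neg (by omega), if_pos hc]
          congr 2
          omega
        · rw [if_pos (by omega), if_neg hc, mul_zero]
      rw [e2, sub_eq_zero] at h1
      exact h1
    · intro z₂ hz₂
      have hu : z₀ + (z₂ - z₀) ∈ U \ {z₀} := by
        rw [add_sub_cancel]
        exact hz₂
      have h1 := heq1 (z₂ - z₀) hu
      rw [Finset.sum_eq_zero (fun j hj => by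
        rw [hcoef j (Finset.mem_range.mp hj), smul_zero])] at h1
      have hu0 : z₂ - z₀ ≠ 0 := hwne hu
      have h2 : h (z₂ - z₀) = 0 := by
        have := h1.symm
        rw [smul_eq_zero] at this
        exact this.resolve_left (pow_ne_zero _ hu0)
      simp only [hh] at h2
      rw [add_sub_cancel] at h2
      exact h2
  -- Step 3
  have step3 : ∀ m k, k < n → n - k ≤ m →
      (b k * b 0 = b k ∧ ∀ z ∈ U \ {z₀}, b k * R₀ z = 0) := by
    intro m
    induction m with
    | zero => intro k hk h0; omega
    | succ m ih =>
      intro k hk hm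
      have hnil : ∀ z ∈ U \ {z₀}, (if k+1 < n then b (k+1) else 0) * R₀ z = 0 := by
        intro z hz
        by_cases hc : k+1 < n
        · rw [if_pos hc]
          exact (ih (k+1) hc (by omega)).2 z hz
        · rw [if_neg hc, zero_mul]
      have hE := (step2 k hk).2
      have hd : b k * b 0 - b k = 0 := by
        have hev : ∀ᶠ u in 𝓝[≠] (0:ℂ),
            b k * b 0 - b k = -(u • (b k * R₀ (z₀+u))) := by
          filter_upwards [hUmem] with u hu
          have h1 := hE (z₀+u) hu
          rw [hnil _ hu, add_sub_cancel_left, sub_zero] at h1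
          linear_combination (norm := module) h1
        have T : Tendsto (fun u : ℂ => -(u • (b k * R₀ (z₀+u)))) (𝓝[≠] (0:ℂ)) (𝓝 0) := by
          have hid : Tendsto (fun u : ℂ => u) (𝓝[≠] (0:ℂ)) (𝓝 0) :=
            tendsto_id.mono_left nhdsWithin_le_nhds
          simpa using (hid.smul (hz0T.const_mul (b k))).neg
        have C : Tendsto (fun _ : ℂ => b k * b 0 - b k) (𝓝[≠] (0:ℂ))
            (𝓝 (b k * b 0 - b k)) := tendsto_const_nhds
        exact tendsto_nhds_unique (C.congr' hev) T
      have hb : b k * b 0 = b k := by rwa [sub_eq_zero] at hd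
      refine ⟨hb, fun z hz => ?_⟩
      have h1 := hE z hz
      rw [hnil _ hz, sub_zero, hb] at h1
      have h2 : (z - z₀) • (b k * R₀ z) = 0 := by
        linear_combination (norm := module) h1
      have hzne : z - z₀ ≠ 0 := sub_ne_zero.mpr hz.2
      rw [smul_eq_zero] at h2
      exact h2.resolve_left hzne
  exact ⟨fun k hk => (step3 (n-k) k hk le_rfl).1, fun k hk => (step2 k hk).1⟩

end core

/-- If `R(z) = Σ_{k<n} b_k (z-z₀)^{-(k+1)} + R₀(z)` (with `R₀` holomorphic
on a neighborhood `U` of `z₀`) satisfies the resolvent equation on `U \ {z₀}`, then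
`b₀` is idempotent, `b₀ b_k = b_k b₀ = b_k` for `k ≤ n-1`, and if `n ≥ 2` then
`b_k = b₁^k` for `1 ≤ k ≤ n-1` and `b₁^n = 0`. -/
theorem laurent_coeff_structure_of_resolventEq
    (B : Type*) [NormedRing B] [NormedAlgebra ℂ B] [CompleteSpace B]
    (z₀ : ℂ) (U : Set ℂ) (hU : IsOpen U) (hz₀ : z₀ ∈ U)
    (n : ℕ) (hn : 1 ≤ n) (b : ℕ → B) (R₀ : ℂ → B) (hR₀ : DifferentiableOn ℂ R₀ U)
    (R : ℂ → B)
    (hR : ∀ z ∈ U \ {z₀},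
      R z = (∑ k ∈ Finset.range n, ((z - z₀) ^ (k + 1))⁻¹ • b k) + R₀ z)
    (hres : ResolventEq (U \ {z₀}) R) :
    b 0 * b 0 = b 0 ∧
    (∀ k < n, b 0 * b k = b k ∧ b k * b 0 = b k) ∧
    (2 ≤ n → (∀ k, 1 ≤ k → k ≤ n - 1 → b k = b 1 ^ k) ∧ b 1 ^ n = 0) := by

  have hcont : ContinuousAt R₀ z₀ :=
    (hR₀.continuousOn.continuousAt (hU.mem_nhds hz₀))
  obtain ⟨hQ, hRel⟩ := core z₀ U hU hz₀ n hn b R₀ hcont R hR hres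
  -- opposite version
  have hcont' : ContinuousAt (fun z => MulOpposite.op (R₀ z)) z₀ :=
    MulOpposite.continuous_op.continuousAt.comp hcont
  have hR' : ∀ z ∈ U \ {z₀}, (fun z => MulOpposite.op (R z)) z
      = (∑ k ∈ Finset.range n, ((z - z₀) ^ (k + 1))⁻¹ • MulOpposite.op (b k))
        + (fun z => MulOpposite.op (R₀ z)) z := by
    intro z hz
    simp only
    rw [hR z hz, MulOpposite.op_add]
    congr 1
    have := map_sum (MulOpposite.opAddEquiv (α := B))
      (fun k => ((z - z₀) ^ (k + 1))⁻¹ • b k) (Finset.range n)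
    simp only [MulOpposite.opAddEquiv_apply] at this
    rw [this]
    exact Finset.sum_congr rfl fun k _ => MulOpposite.op_smul _ _
  have hres' : ResolventEq (U \ {z₀}) (fun z => MulOpposite.op (R z)) := by
    intro z₁ hz₁ z₂ hz₂
    have h1 := hres z₂ hz₂ z₁ hz₁
    simp only
    rw [← MulOpposite.op_mul, ← MulOpposite.op_smul, ← MulOpposite.op_sub]
    congr 1
    have : R z₁ - R z₂ = -(R z₂ - R z₁) := by abel
    rw [this, h1, ← neg_smul]
    congr 1
    ring
  obtain ⟨hQ', _⟩ := core z₀ U hU hz₀ n hn (fun k => MulOpposite.op (b k))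
    (fun z => MulOpposite.op (R₀ z)) hcont' (fun z => MulOpposite.op (R z)) hR' hres'
  have hQ2 : ∀ k < n, b 0 * b k = b k := by
    intro k hk
    have := hQ' k hk
    simp only [← MulOpposite.op_mul] at this
    exact MulOpposite.op_injective this
  refine ⟨hQ 0 hn, fun k hk => ⟨hQ2 k hk, hQ k hk⟩, fun h2 => ?_⟩
  have hpow : ∀ k, 1 ≤ k → k ≤ n - 1 → b k = b 1 ^ k := by
    intro k hk1 hk2
    induction k with
    | zero => omega
    | succ k ih =>
      rcases Nat.eq_zero_or_pos k with rfl | hkpos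
      · simp
      · have ihk : b k = b 1 ^ k := ih hkpos (by omega)
        have hrel := hRel k (by omega) 0 (by omega)
        rw [if_pos (by omega : k + 1 < n), if_pos (by omega : 0 + 1 < n)] at hrel
        rw [pow_succ, ← ihk, ← hrel, hQ (k+1) (by omega)]
  have hlast : b (n-1) * b 1 = 0 := by
    have hrel := hRel (n-1) (by omega) 0 (by omega)
    rw [if_neg (by omega : ¬ (n - 1 + 1 < n)), if_pos (by omega : 0 + 1 < n), zero_mul] at hrel
    exact hrel.symm
  refine ⟨hpow, ?_⟩
  have : b 1 ^ n = b 1 ^ (n-1) * b 1 := by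
    rw [← pow_succ]
    congr 1
    omega
  rw [this, ← hpow (n-1) (by omega) le_rfl, hlast]
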